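/- Bisimulation transfer property, forward direction (intermediate claim in the proof of Enforcement Transparency): let φ ∈ SHMLnf be closed and guarded and suppose p ∈ ⟦φ⟧. If p -μ-> p' for some μ ∈ Act ∪ {τ}, then there exists a closed formula ψ ∈ SHMLnf such that ⟦φ⟧e[p] -μ-> ⟦ψ⟧e[p'] and p' ∈ ⟦ψ⟧. -/

import Mathlib

set_option autoImplicit false

/-- A labelled transition system over observable actions `Act`;
`none` plays the role of the silent action τ. -/
structure LTS (Act : Type) where
  S : Type
  Tr : S → Option Act → S → Prop

namespace Enf

open scoped Classical

variable {Act : Type}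

/-- Zero or more silent steps. -/
def TauStar (L : LTS Act) : L.S → L.S → Prop :=
  Relation.ReflTransGen (fun p q => L.Tr p none q)

/-- The weak transition `p =a=> q`. -/
def WStep (L : LTS Act) (p : L.S) (a : Act) (q : L.S) : Prop :=
  ∃ p₁ p₂, TauStar L p p₁ ∧ L.Tr p₁ (some a) p₂ ∧ TauStar L p₂ q

/-- Weak trace `p =t=> q`. -/
inductive WTrace (L : LTS Act) : L.S → List Act → L.S → Prop
  | nil {p q : L.S} : TauStar L p q → WTrace L p [] q
  | cons {p r q : L.S} {a : Act} {t : List Act} :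
      WStep L p a r → WTrace L r t q → WTrace L p (a :: t) q

/-- SHML formulas: truth, falsehood, fixpoint variables, finite conjunctions,
modalities `[η]φ` (a guard set of actions together with an action-indexed
continuation, representing the symbolic action and the matching substitutions),
and greatest fixpoints. -/
inductive Frm (Act : Type) : Type where
  | tt : Frm Act
  | ff : Frm Act
  | var : ℕ → Frm Act
  | conj : (n : ℕ) → (Fin n → Frm Act) → Frm Act
  | box : Set Act → (Act → Frm Act) → Frm Act
  | max : ℕ → Frm Act → Frm Act

namespace Frm

/-- Free fixpoint variables. -/
def fv : Frm Act → Set ℕ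
  | .tt => ∅
  | .ff => ∅
  | .var X => {X}
  | .conj _ f => ⋃ i, fv (f i)
  | .box G k => ⋃ a ∈ G, fv (k a)
  | .max X φ => fv φ \ {X}

def Closed (φ : Frm Act) : Prop := fv φ = ∅

/-- Substitution `φ[ψ/X]` (of a closed formula `ψ`). -/
def subst : Frm Act → ℕ → Frm Act → Frm Act
  | .tt, _, _ => .tt
  | .ff, _, _ => .ff
  | .var Y, X, ψ => if Y = X then ψ else .var Y
  | .conj n f, X, ψ => .conj n (fun i => subst (f i) X ψ)
  | .box G k, X, ψ => .box G (fun a => subst (k a) X ψ)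
  | .max Y φ, X, ψ => if Y = X then .max Y φ else .max Y (subst φ X ψ)

/-- The normal-form fragment SHMLnf: conjunctions are conjunctions of
modalities with pairwise-disjoint guards, and each greatest fixpoint binds a
variable occurring free in its body. -/
inductive IsNF : Frm Act → Prop
  | tt : IsNF .tt
  | ff : IsNF .ff
  | var (X : ℕ) : IsNF (.var X)
  | conj (n : ℕ) (G : Fin n → Set Act) (k : Fin n → Act → Frm Act)
      (hdisj : ∀ i j : Fin n, i ≠ j → ∀ a : Act, a ∈ G i → a ∉ G j)
      (hk : ∀ i : Fin n, ∀ a ∈ G i, IsNF (k i a)) :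
      IsNF (.conj n fun i => .box (G i) (k i))
  | max (X : ℕ) (φ : Frm Act) (hfree : X ∈ fv φ) (hφ : IsNF φ) : IsNF (.max X φ)

/-- `gvar X φ`: the variable `X` does not occur unguarded (i.e. outside every
modality) in `φ`. -/
def gvar (X : ℕ) : Frm Act → Prop
  | .tt => True
  | .ff => True
  | .var Y => Y ≠ X
  | .conj _ f => ∀ i, gvar X (f i)
  | .box _ _ => True
  | .max Y φ => Y = X ∨ gvar X φ

/-- A formula is guarded if every occurrence of a fixpoint variable lies
beneath a modality. -/
def Guarded : Frm Act → Prop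
  | .tt => True
  | .ff => True
  | .var _ => True
  | .conj _ f => ∀ i, Guarded (f i)
  | .box G k => ∀ a ∈ G, Guarded (k a)
  | .max X φ => gvar X φ ∧ Guarded φ

/-- Number of top-level greatest-fixpoint binders. -/
def topMax : Frm Act → ℕ
  | .max _ φ => topMax φ + 1
  | _ => 0

end Frm

/-- Denotational semantics of (possibly open) formulas, relative to an
environment mapping fixpoint variables to sets of states; `max` is interpreted
as the greatest fixpoint of the induced monotone map. -/
def sem (L : LTS Act) : Frm Act → (ℕ → Set L.S) → Set L.S
  | .tt, _ => Set.univ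
  | .ff, _ => ∅
  | .var X, ρ => ρ X
  | .conj _ f, ρ => ⋂ i, sem L (f i) ρ
  | .box G k, ρ => {p | ∀ a ∈ G, ∀ q, WStep L p a q → q ∈ sem L (k a) ρ}
  | .max X φ, ρ => ⋃₀ {S | S ⊆ sem L φ (Function.update ρ X S)}

/-- Semantics of closed formulas. -/
def Sem (L : LTS Act) (φ : Frm Act) : Set L.S := sem L φ fun _ => ∅

/-- Satisfiability. -/
def SatIn (L : LTS Act) (φ : Frm Act) : Prop := (Sem L φ).Nonempty

/-- The violation relation `p ⊨v^t φ`, defined as the least relation closed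
under the given rules. -/
inductive Viol (L : LTS Act) : L.S → List Act → Frm Act → Prop
  | ff (p : L.S) : Viol L p [] .ff
  | conj {p : L.S} {t : List Act} {n : ℕ} {f : Fin n → Frm Act} (j : Fin n) :
      Viol L p t (f j) → Viol L p t (.conj n f)
  | box {p p' : L.S} {t : List Act} {a : Act} {G : Set Act} {k : Act → Frm Act} :
      a ∈ G → WStep L p a p' → Viol L p' t (k a) → Viol L p (a :: t) (.box G k)
  | max {p : L.S} {t : List Act} {X : ℕ} {φ : Frm Act} :
      Viol L p t (Frm.subst φ X (.max X φ)) → Viol L p t (.max X φ)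

/-- Transducers (enforcement monitors): identity, symbolic transformation
prefixes (a guard set of extended input actions, with `none` standing for the
insertion pattern •, an output per matched input, with `none` standing for τ,
and a continuation per matched input), finite selections, recursion, and
recursion variables. -/
inductive Trn (Act : Type) : Type where
  | id : Trn Act
  | prf : Set (Option Act) → (Option Act → Option Act) → (Option Act → Trn Act) → Trn Act
  | sel : (n : ℕ) → (Fin n → Trn Act) → Trn Act
  | fix : ℕ → Trn Act → Trn Act
  | var : ℕ → Trn Act

namespace Trn

def tsubst : Trn Act → ℕ → Trn Act → Trn Act
  | .id, _, _ => .id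
  | .prf G out k, x, s => .prf G out fun γ => tsubst (k γ) x s
  | .sel n f, x, s => .sel n fun i => tsubst (f i) x s
  | .fix y e, x, s => if y = x then .fix y e else .fix y (tsubst e x s)
  | .var y, x, s => if y = x then s else .var y

end Trn

/-- Transducer transitions: labels are pairs (input, output) where input
`none` is the insertion pattern • and output `none` is τ. -/
inductive TStep : Trn Act → Option Act × Option Act → Trn Act → Prop
  | id (a : Act) : TStep .id (some a, some a) .id
  | prf {G : Set (Option Act)} {out : Option Act → Option Act}
      {k : Option Act → Trn Act} {γ : Option Act} (h : γ ∈ G) :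
      TStep (.prf G out k) (γ, out γ) (k γ)
  | sel {n : ℕ} {f : Fin n → Trn Act} {l : Option Act × Option Act}
      {e' : Trn Act} (i : Fin n) (h : TStep (f i) l e') :
      TStep (.sel n f) l e'
  | fix {x : ℕ} {e : Trn Act} {l : Option Act × Option Act} {e' : Trn Act}
      (h : TStep (Trn.tsubst e x (.fix x e)) l e') :
      TStep (.fix x e) l e'

/-- Instrumentation of a transducer on a system. -/
inductive IStep (L : LTS Act) : Trn Act × L.S → Option Act → Trn Act × L.S → Prop
  | trn {e e' : Trn Act} {p p' : L.S} {a : Act} {μ : Option Act} :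
      L.Tr p (some a) p' → TStep e (some a, μ) e' → IStep L (e, p) μ (e', p')
  | asy {e : Trn Act} {p p' : L.S} :
      L.Tr p none p' → IStep L (e, p) none (e, p')
  | ins {e e' : Trn Act} {p : L.S} {μ : Option Act} :
      TStep e (none, μ) e' → IStep L (e, p) μ (e', p)
  | ter {e : Trn Act} {p p' : L.S} {a : Act} :
      L.Tr p (some a) p' →
      (∀ μ e', ¬ TStep e (some a, μ) e') →
      (∀ μ e', ¬ TStep e (none, μ) e') →
      IStep L (e, p) (some a) (Trn.id, p')

/-- The LTS of monitored systems `e[p]`. -/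
def instLTS (L : LTS Act) : LTS Act := ⟨Trn Act × L.S, IStep L⟩

/-- Strong bisimulations between (the state spaces of) two LTSs. -/
def IsBisim (L₁ L₂ : LTS Act) (R : L₁.S → L₂.S → Prop) : Prop :=
  ∀ s r, R s r →
    (∀ μ s', L₁.Tr s μ s' → ∃ r', L₂.Tr r μ r' ∧ R s' r') ∧
    (∀ μ r', L₂.Tr r μ r' → ∃ s', L₁.Tr s μ s' ∧ R s' r')

/-- Strong bisimilarity. -/
def Bisim (L₁ L₂ : LTS Act) (s : L₁.S) (r : L₂.S) : Prop :=
  ∃ R, IsBisim L₁ L₂ R ∧ R s r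

/-- The synthesis function `⟦-⟧e` from SHMLnf formulas to transducers:
formula variable `X` becomes monitor variable `X+1`; `tt` and `ff` become the
identity monitor; `max X.φ` becomes the corresponding recursive monitor; and a
normalised conjunction of modalities becomes a recursive selection (on the
fresh variable `0`) of symbolic prefixes that suppress (output τ, continue as
the recursion variable) actions whose continuation formula is `ff` and pass
through all other matched actions, continuing with the synthesis of the
respective continuation formula. -/
noncomputable def synth : Frm Act → Trn Act
  | .tt => .id
  | .ff => .id
  | .var X => .var (X + 1)
  | .max X φ => .fix (X + 1) (synth φ)
  | .box G k =>
      .prf {γ | ∃ a ∈ G, γ = some a}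
        (fun γ =>
          match γ with
          | some a => if k a = Frm.ff then none else some a
          | none => none)
        (fun γ =>
          match γ with
          | some a => if k a = Frm.ff then Trn.var 0 else synth (k a)
          | none => .id)
  | .conj n f => .fix 0 (.sel n fun i => synth (f i))

/-- Fuelled residual function (the fuel is consumed by fixpoint unfoldings;
on guarded closed SHMLnf formulas `topMax φ + 1` units of fuel suffice). -/
noncomputable def afterFuel : ℕ → Frm Act → Act → Frm Act
  | 0, _, _ => .tt
  | n + 1, φ, a =>
    match φ with
    | .max X ψ => afterFuel n (Frm.subst ψ X (.max X ψ)) a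
    | .conj m f =>
        if h : ∃ i : Fin m, ∃ G : Set Act, ∃ k : Act → Frm Act,
            f i = Frm.box G k ∧ a ∈ G
        then h.choose_spec.choose_spec.choose a
        else .tt
    | ψ => ψ

/-- The residual `after(φ, a)` of a guarded closed SHMLnf formula. -/
noncomputable def after (φ : Frm Act) (a : Act) : Frm Act :=
  afterFuel (Frm.topMax φ + 1) φ a

/-- Satisfaction relations (the coinductive rules of `⊨s`). -/
def IsSatRel (L : LTS Act) (R : L.S → Frm Act → Prop) : Prop :=
  (∀ p, ¬ R p .ff) ∧
  (∀ p (n : ℕ) (f : Fin n → Frm Act), R p (.conj n f) → ∀ i, R p (f i)) ∧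
  (∀ p (G : Set Act) (k : Act → Frm Act), R p (.box G k) →
      ∀ a ∈ G, ∀ q, WStep L p a q → R q (k a)) ∧
  (∀ p (X : ℕ) (φ : Frm Act), R p (.max X φ) → R p (Frm.subst φ X (.max X φ)))

/-- The largest satisfaction relation `⊨s`. -/
def SatCo (L : LTS Act) (p : L.S) (φ : Frm Act) : Prop :=
  ∃ R, IsSatRel L R ∧ R p φ


section Aux

variable {Act : Type} {L : LTS Act}

open Frm

lemma sem_mono (φ : Frm Act) {ρ₁ ρ₂ : ℕ → Set L.S} (h : ∀ X, ρ₁ X ⊆ ρ₂ X) :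
    sem L φ ρ₁ ⊆ sem L φ ρ₂ := by
  induction φ generalizing ρ₁ ρ₂ with
  | tt => exact le_rfl
  | ff => exact le_rfl
  | var X => exact h X
  | conj n f ih =>
    intro p hp
    exact Set.mem_iInter.2 fun i => ih i h (Set.mem_iInter.1 hp i)
  | box G k ih =>
    intro p hp a ha q hq
    exact ih a h (hp a ha q hq)
  | max X φ ih =>
    rintro p ⟨S, hS, hpS⟩
    refine ⟨S, ?_, hpS⟩
    intro q hq
    refine ih (ρ₁ := Function.update ρ₁ X S) (fun Y => ?_) (hS hq)
    rcases eq_or_ne Y X with rfl | hne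
    · simp
    · simp [Function.update_of_ne hne]; exact h Y

lemma sem_congr (φ : Frm Act) {ρ₁ ρ₂ : ℕ → Set L.S} (h : ∀ X ∈ fv φ, ρ₁ X = ρ₂ X) :
    sem L φ ρ₁ = sem L φ ρ₂ := by
  induction φ generalizing ρ₁ ρ₂ with
  | tt => rfl
  | ff => rfl
  | var X => exact h X (by simp [fv])
  | conj n f ih =>
    simp only [sem]
    exact Set.iInter_congr fun i => ih i fun X hX => h X (by simp only [fv]; exact Set.mem_iUnion.2 ⟨i, hX⟩)
  | box G k ih =>
    simp only [sem]
    ext p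
    constructor <;> intro hp a ha q hq
    · rw [← ih a fun X hX => h X (by simp only [fv]; exact Set.mem_iUnion.2 ⟨a, Set.mem_iUnion.2 ⟨ha, hX⟩⟩)]
      exact hp a ha q hq
    · rw [ih a fun X hX => h X (by simp only [fv]; exact Set.mem_iUnion.2 ⟨a, Set.mem_iUnion.2 ⟨ha, hX⟩⟩)]
      exact hp a ha q hq
  | max X φ ih =>
    simp only [sem]
    refine congrArg Set.sUnion ?_
    ext S
    simp only [Set.mem_setOf_eq]
    have : sem L φ (Function.update ρ₁ X S) = sem L φ (Function.update ρ₂ X S) := by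
      refine ih fun Y hY => ?_
      rcases eq_or_ne Y X with rfl | hne
      · simp
      · simp only [Function.update_of_ne hne]
        exact h Y (by simp only [fv]; exact ⟨hY, hne⟩)
    rw [this]

lemma sem_of_closed (φ : Frm Act) (hφ : Closed φ) (ρ : ℕ → Set L.S) :
    sem L φ ρ = Sem L φ :=
  sem_congr φ (fun X hX => by rw [Closed] at hφ; rw [hφ] at hX; exact hX.elim)

lemma sem_subst (ψ : Frm Act) (X : ℕ) {χ : Frm Act} (hχ : Closed χ) (ρ : ℕ → Set L.S) :
    sem L (subst ψ X χ) ρ = sem L ψ (Function.update ρ X (Sem L χ)) := by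
  induction ψ generalizing ρ with
  | tt => rfl
  | ff => rfl
  | var Y =>
    rcases eq_or_ne Y X with rfl | hne
    · simp only [subst, if_pos rfl, sem, Function.update_self, ↓reduceIte]
      exact sem_of_closed χ hχ ρ
    · simp [subst, hne, sem, Function.update_of_ne hne]
  | conj n f ih =>
    simp only [subst, sem]
    exact Set.iInter_congr fun i => ih i ρ
  | box G k ih =>
    simp only [subst, sem]
    ext p
    simp only [Set.mem_setOf_eq]
    constructor <;> intro hp a ha q hq
    · rw [← ih a ρ]; exact hp a ha q hq
    · rw [ih a ρ]; exact hp a ha q hq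
  | max Y φ ih =>
    rcases eq_or_ne Y X with rfl | hne
    · simp only [subst, if_pos rfl, ↓reduceIte]
      refine sem_congr _ fun Z hZ => ?_
      simp only [fv, Set.mem_diff, Set.mem_singleton_iff] at hZ
      rw [Function.update_of_ne hZ.2]
    · simp only [subst, if_neg hne, sem]
      refine congrArg Set.sUnion ?_
      ext S
      simp only [Set.mem_setOf_eq]
      rw [ih, Function.update_comm hne]

lemma sem_tau (φ : Frm Act) :
    ∀ (ρ : ℕ → Set L.S), (∀ X q q', q ∈ ρ X → L.Tr q none q' → q' ∈ ρ X) →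
    ∀ p p', p ∈ sem L φ ρ → L.Tr p none p' → p' ∈ sem L φ ρ := by
  induction φ with
  | tt => intros; trivial
  | ff => intro ρ _ p p' h _; exact h.elim
  | var X => intro ρ hρ p p' h hs; exact hρ X p p' h hs
  | conj n f ih =>
    intro ρ hρ p p' h hs
    exact Set.mem_iInter.2 fun i => ih i ρ hρ p p' (Set.mem_iInter.1 h i) hs
  | box G k ih =>
    intro ρ hρ p p' h hs a ha q hq
    obtain ⟨p₁, p₂, h1, h2, h3⟩ := hq
    exact h a ha q ⟨p₁, p₂, Relation.ReflTransGen.head hs h1, h2, h3⟩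
  | max X φ ih =>
    intro ρ hρ p p' hp hs
    obtain ⟨S, hS, hpS⟩ := hp
    refine ⟨{q | ∃ r ∈ S, TauStar L r q}, ?_, ⟨p, hpS, Relation.ReflTransGen.single hs⟩⟩
    have hTτ : ∀ q q', q ∈ {q | ∃ r ∈ S, TauStar L r q} → L.Tr q none q' →
        q' ∈ {q | ∃ r ∈ S, TauStar L r q} := by
      rintro q q' ⟨r, hr, hrq⟩ hq'
      exact ⟨r, hr, hrq.tail hq'⟩
    have hρ' : ∀ Y q q', q ∈ Function.update ρ X {q | ∃ r ∈ S, TauStar L r q} Y →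
        L.Tr q none q' → q' ∈ Function.update ρ X {q | ∃ r ∈ S, TauStar L r q} Y := by
      intro Y
      rcases eq_or_ne Y X with rfl | hne
      · simpa using hTτ
      · simpa [Function.update_of_ne hne] using hρ Y
    rintro q ⟨r, hr, hrq⟩
    have hr' : r ∈ sem L φ (Function.update ρ X {q | ∃ r ∈ S, TauStar L r q}) := by
      refine sem_mono φ (fun Y => ?_) (hS hr)
      rcases eq_or_ne Y X with rfl | hne
      · simp only [Function.update_self]
        exact fun z hz => ⟨z, hz, Relation.ReflTransGen.refl⟩
      · simp [Function.update_of_ne hne]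
    clear hr
    induction hrq with
    | refl => exact hr'
    | tail h1 h2 ih2 => exact ih _ hρ' _ _ ih2 h2

lemma mem_sem_unfold {X : ℕ} {ψ : Frm Act} {p : L.S} (hcl : Closed (Frm.max X ψ))
    (h : p ∈ Sem L (.max X ψ)) : p ∈ Sem L (subst ψ X (.max X ψ)) := by
  rw [Sem, sem_subst ψ X hcl]
  obtain ⟨S, hS, hpS⟩ := h
  refine sem_mono ψ (fun Y => ?_) (hS hpS)
  rcases eq_or_ne Y X with rfl | hne
  · simp only [Function.update_self]
    exact fun q hq => ⟨S, hS, hq⟩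
  · simp [Function.update_of_ne hne]

lemma fv_subst (ψ : Frm Act) (X : ℕ) {χ : Frm Act} (hχ : Closed χ) :
    fv (subst ψ X χ) = fv ψ \ {X} := by
  induction ψ with
  | tt => simp [subst, fv]
  | ff => simp [subst, fv]
  | var Y =>
    rcases eq_or_ne Y X with rfl | hne
    · simp [subst, fv, hχ]; exact hχ
    · simp only [subst, if_neg hne, fv]
      rw [Set.diff_singleton_eq_self (fun h => hne (Set.mem_singleton_iff.1 h).symm)]
  | conj n f ih =>
    simp only [subst, fv]
    rw [Set.iUnion_diff]
    exact Set.iUnion_congr ih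
  | box G k ih =>
    simp only [subst, fv]
    rw [Set.iUnion_diff]
    refine Set.iUnion_congr fun a => ?_
    rw [Set.iUnion_diff]
    exact Set.iUnion_congr fun _ => ih a
  | max Y φ ih =>
    rcases eq_or_ne Y X with rfl | hne
    · simp only [subst, if_pos rfl, fv, ↓reduceIte]
      rw [Set.diff_diff, Set.union_self]
    · simp only [subst, if_neg hne, fv, ih]
      rw [Set.diff_diff, Set.diff_diff, Set.union_comm]

lemma gvar_of_not_mem_fv {Y : ℕ} {χ : Frm Act} (h : Y ∉ fv χ) : gvar Y χ := by
  induction χ with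
  | tt => trivial
  | ff => trivial
  | var Z => exact fun hz => h (by simp [fv, hz])
  | conj n f ih =>
    intro i
    exact ih i fun hm => h (by simp only [fv]; exact Set.mem_iUnion.2 ⟨i, hm⟩)
  | box G k ih => trivial
  | max Z φ ih =>
    rcases eq_or_ne Z Y with rfl | hne
    · exact Or.inl rfl
    · refine Or.inr (ih fun hm => h ?_)
      simp only [fv, Set.mem_diff, Set.mem_singleton_iff]
      exact ⟨hm, fun hzy => hne (hzy ▸ rfl)⟩

lemma gvar_subst {Y : ℕ} (ψ : Frm Act) (X : ℕ) {χ : Frm Act}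
    (h1 : gvar Y ψ) (h2 : gvar Y χ) : gvar Y (subst ψ X χ) := by
  induction ψ with
  | tt => trivial
  | ff => trivial
  | var Z =>
    rcases eq_or_ne Z X with rfl | hne
    · simpa [subst] using h2
    · simpa [subst, hne] using h1
  | conj n f ih => exact fun i => ih i (h1 i)
  | box G k ih => trivial
  | max Z φ ih =>
    rcases eq_or_ne Z X with rfl | hne
    · simpa [subst] using h1
    · simp only [subst, if_neg hne]
      rcases h1 with h1 | h1
      · exact Or.inl h1
      · exact Or.inr (ih h1)

lemma guarded_subst (ψ : Frm Act) (X : ℕ) {χ : Frm Act}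
    (h1 : Guarded ψ) (h2 : Guarded χ) (hcl : Closed χ) : Guarded (subst ψ X χ) := by
  induction ψ with
  | tt => trivial
  | ff => trivial
  | var Z =>
    rcases eq_or_ne Z X with rfl | hne
    · simpa [subst] using h2
    · simp [subst, hne, Guarded]
  | conj n f ih => exact fun i => ih i (h1 i)
  | box G k ih =>
    intro a ha
    exact ih a (h1 a ha)
  | max Z φ ih =>
    rcases eq_or_ne Z X with rfl | hne
    · simpa [subst] using h1
    · simp only [subst, if_neg hne]
      refine ⟨gvar_subst φ X h1.1 (gvar_of_not_mem_fv ?_), ih h1.2⟩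
      have hfv : fv χ = ∅ := hcl
      rw [hfv]
      exact Set.notMem_empty Z

lemma isNF_subst {ψ : Frm Act} (hψ : IsNF ψ) (X : ℕ) {χ : Frm Act}
    (hχ : IsNF χ) (hcl : Closed χ) : IsNF (subst ψ X χ) := by
  induction hψ with
  | tt => exact .tt
  | ff => exact .ff
  | var Y =>
    rcases eq_or_ne Y X with rfl | hne
    · simpa [subst] using hχ
    · simpa [subst, hne] using IsNF.var Y
  | conj n G k hdisj hk ih =>
    have : subst (.conj n fun i => .box (G i) (k i)) X χ
        = .conj n fun i => .box (G i) (fun a => subst (k i a) X χ) := rfl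
    rw [this]
    exact .conj n G _ hdisj fun i a ha => ih i a ha
  | max Y φ hfree hφ ih =>
    rcases eq_or_ne Y X with rfl | hne
    · simpa [subst] using IsNF.max Y φ hfree hφ
    · simp only [subst, if_neg hne]
      refine .max Y _ ?_ ih
      rw [fv_subst φ X hcl]
      exact ⟨hfree, fun h => hne (by simpa using h)⟩

lemma topMax_subst_le (ψ : Frm Act) (X : ℕ) (χ : Frm Act) (hg : gvar X ψ) :
    topMax (subst ψ X χ) ≤ topMax ψ := by
  induction ψ with
  | tt => simp [subst, topMax]
  | ff => simp [subst, topMax]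
  | var Y =>
    have hne : Y ≠ X := hg
    simp [subst, hne, topMax]
  | conj n f ih => simp [subst, topMax]
  | box G k ih => simp [subst, topMax]
  | max Y φ ih =>
    rcases eq_or_ne Y X with rfl | hne
    · simp [subst]
    · simp only [subst, if_neg hne, topMax]
      rcases hg with h | h
      · exact absurd h hne
      · exact Nat.succ_le_succ (ih h)

lemma subst_eq_ff {ψ : Frm Act} {X : ℕ} {χ : Frm Act} (hχ : χ ≠ .ff) :
    subst ψ X χ = .ff ↔ ψ = .ff := by
  cases ψ with
  | tt => simp [subst]
  | ff => simp [subst]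
  | var Y =>
    simp only [subst]
    split
    · simp [hχ]
    · simp
  | conj n f => simp [subst]
  | box G k => simp [subst]
  | max Y φ =>
    simp only [subst]
    split <;> simp

lemma synth_subst (ψ : Frm Act) (X : ℕ) {χ : Frm Act} (hχ : χ ≠ .ff) :
    synth (subst ψ X χ) = Trn.tsubst (synth ψ) (X + 1) (synth χ) := by
  induction ψ with
  | tt => rfl
  | ff => rfl
  | var Y =>
    rcases eq_or_ne Y X with rfl | hne
    · simp [subst, synth, Trn.tsubst]
    · simp [subst, hne, synth, Trn.tsubst, fun h => hne (Nat.succ_injective h)]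
  | conj n f ih =>
    have h0 : (0 : ℕ) ≠ X + 1 := by omega
    simp only [subst, synth, Trn.tsubst, if_neg h0, ih]
  | box G k ih =>
    simp only [subst, synth, Trn.tsubst]
    congr 1
    · funext γ
      cases γ with
      | none => rfl
      | some a =>
        by_cases hff : k a = Frm.ff
        · have h1 : subst (k a) X χ = Frm.ff := by rw [hff]; rfl
          dsimp only
          rw [if_pos h1, if_pos hff]
        · have h2 : subst (k a) X χ ≠ Frm.ff := fun h => hff ((subst_eq_ff hχ).1 h)
          dsimp only
          rw [if_neg h2, if_neg hff]
    · funext γ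
      cases γ with
      | none => rfl
      | some a =>
        by_cases hff : k a = Frm.ff
        · have h1 : subst (k a) X χ = Frm.ff := by rw [hff]; rfl
          dsimp only [Trn.tsubst]
          rw [if_pos h1, if_pos hff]
          have h0 : ¬ ((0:ℕ) = X + 1) := by omega
          simp [Trn.tsubst, h0]
        · have h2 : subst (k a) X χ ≠ Frm.ff := fun h => hff ((subst_eq_ff hχ).1 h)
          dsimp only [Trn.tsubst]
          rw [if_neg h2, if_neg hff]
          exact ih a
  | max Y φ ih =>
    rcases eq_or_ne Y X with rfl | hne
    · simp [subst, synth, Trn.tsubst]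
    · have : Y + 1 ≠ X + 1 := fun h => hne (Nat.succ_injective h)
      simp only [subst, if_neg hne, synth, Trn.tsubst, if_neg this]
      rw [ih]

lemma tsubst_synth {ψ : Frm Act} (h : IsNF ψ) (s : Trn Act) :
    Trn.tsubst (synth ψ) 0 s = synth ψ := by
  induction h with
  | tt => rfl
  | ff => rfl
  | var X => simp [synth, Trn.tsubst]
  | conj n G k hdisj hk ih => simp [synth, Trn.tsubst]
  | max X φ hfree hφ ih => simp [synth, Trn.tsubst, ih]

lemma istep_fix {x : ℕ} {e : Trn Act} {p : L.S} {a : Act} {q : Trn Act × L.S}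
    (h : IStep L (Trn.tsubst e x (.fix x e), p) (some a) q) :
    IStep L (.fix x e, p) (some a) q := by
  cases h with
  | trn h1 h2 => exact .trn h1 (.fix h2)
  | ins h1 => exact .ins (.fix h1)
  | ter h1 h2 h3 =>
    refine .ter h1 (fun μ e' hc => ?_) (fun μ e' hc => ?_)
    · cases hc with | fix hh => exact h2 μ e' hh
    · cases hc with | fix hh => exact h3 μ e' hh

lemma tstep_sel_inv {n : ℕ} {f : Fin n → Trn Act} {l : Option Act × Option Act} {e' : Trn Act}
    (h : TStep (Trn.sel n f) l e') : ∃ i, TStep (f i) l e' := by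
  cases h with | sel i h => exact ⟨i, h⟩

lemma tstep_prf_inv {G : Set (Option Act)} {out : Option Act → Option Act}
    {k : Option Act → Trn Act} {l : Option Act × Option Act} {e' : Trn Act}
    (h : TStep (Trn.prf G out k) l e') : l.1 ∈ G ∧ l.2 = out l.1 ∧ e' = k l.1 := by
  cases h with | prf h => exact ⟨h, rfl, rfl⟩

lemma tstep_fix_inv {x : ℕ} {e : Trn Act} {l : Option Act × Option Act} {e' : Trn Act}
    (h : TStep (Trn.fix x e) l e') : TStep (Trn.tsubst e x (.fix x e)) l e' := by
  cases h with | fix h => exact h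

end Aux


lemma transfer_aux {Act : Type} {L : LTS Act} : ∀ (N : ℕ) (φ : Frm Act),
    Frm.topMax φ ≤ N → φ.Closed → φ.IsNF → φ.Guarded →
    ∀ (p p' : L.S) (μ : Option Act), p ∈ Sem L φ → L.Tr p μ p' →
    ∃ ψ : Frm Act, ψ.Closed ∧ ψ.IsNF ∧
      IStep L (synth φ, p) μ (synth ψ, p') ∧ p' ∈ Sem L ψ := by
  intro N
  induction N using Nat.strong_induction_on with
  | _ N IH =>
  intro φ hN hclosed hnf hguard p p' μ hsat hstep
  cases μ with
  | none =>
    refine ⟨φ, hclosed, hnf, IStep.asy hstep, ?_⟩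
    exact sem_tau φ (fun _ => ∅) (fun X q q' hq _ => hq.elim) p p' hsat hstep
  | some a =>
    cases hnf with
    | tt =>
      exact ⟨.tt, hclosed, .tt, IStep.trn hstep (TStep.id a), trivial⟩
    | ff => exact hsat.elim
    | var X =>
      exfalso
      have hx : X ∈ Frm.fv (Frm.var X : Frm Act) := rfl
      rw [hclosed] at hx
      exact hx
    | conj n G k hdisj hk =>
      have hconj : synth (Frm.conj n fun i => Frm.box (G i) (k i))
          = Trn.fix 0 (Trn.sel n fun i => synth (Frm.box (G i) (k i))) := by rw [synth]
      have hbox : ∀ j : Fin n, synth (Frm.box (G j) (k j))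
          = Trn.prf {γ : Option Act | ∃ b ∈ G j, γ = some b}
            (fun γ => match γ with
              | some b => if k j b = Frm.ff then none else some b
              | none => none)
            (fun γ => match γ with
              | some b => if k j b = Frm.ff then Trn.var 0 else synth (k j b)
              | none => Trn.id) := fun j => by rw [synth]
      by_cases hmem : ∃ i, a ∈ G i
      · obtain ⟨i, hai⟩ := hmem
        have hW : WStep L p a p' :=
          ⟨p, p', Relation.ReflTransGen.refl, hstep, Relation.ReflTransGen.refl⟩
        have hp' : p' ∈ Sem L (k i a) := (Set.mem_iInter.1 hsat i) a hai p' hW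
        by_cases hff : k i a = Frm.ff
        · rw [hff] at hp'; exact hp'.elim
        · have hclki : (k i a).Closed := by
            have hsub : Frm.fv (k i a) ⊆ Frm.fv (Frm.conj n fun i => Frm.box (G i) (k i)) := by
              intro x hx
              exact Set.mem_iUnion.2 ⟨i, Set.mem_iUnion.2 ⟨a, Set.mem_iUnion.2 ⟨hai, hx⟩⟩⟩
            rw [hclosed] at hsub
            exact Set.subset_empty_iff.1 hsub
          have hT : TStep (synth (Frm.conj n fun i => Frm.box (G i) (k i)))
              (some a, some a) (synth (k i a)) := by
            rw [hconj]
            refine TStep.fix ?_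
            dsimp only [Trn.tsubst]
            refine TStep.sel i ?_
            rw [hbox i]
            dsimp only [Trn.tsubst]
            have h := TStep.prf (γ := some a)
              (G := {γ : Option Act | ∃ b ∈ G i, γ = some b})
              (out := fun γ => match γ with
                | some b => if k i b = Frm.ff then none else some b
                | none => none)
              (k := fun γ => Trn.tsubst (match γ with
                | some b => if k i b = Frm.ff then Trn.var 0 else synth (k i b)
                | none => Trn.id) 0
                (Trn.fix 0 (Trn.sel n fun i => synth (Frm.box (G i) (k i)))))
              ⟨a, hai, rfl⟩
            dsimp only at h
            rw [if_neg hff, if_neg hff, tsubst_synth (hk i a hai)] at h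
            exact h
          exact ⟨k i a, hclki, hk i a hai, IStep.trn hstep hT, hp'⟩
      · refine ⟨.tt, by simp [Frm.Closed, Frm.fv], .tt, ?_, trivial⟩
        have hno : ∀ (γ : Option Act), (∀ b, γ = some b → ¬ ∃ i, b ∈ G i) →
            ∀ (μ : Option Act) e',
            ¬ TStep (synth (Frm.conj n fun i => Frm.box (G i) (k i))) (γ, μ) e' := by
          intro γ hγ μ e' hT
          rw [hconj] at hT
          have h1 := tstep_fix_inv hT
          dsimp only [Trn.tsubst] at h1
          obtain ⟨i, h2⟩ := tstep_sel_inv h1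
          rw [hbox i] at h2
          dsimp only [Trn.tsubst] at h2
          obtain ⟨hγ2, -, -⟩ := tstep_prf_inv h2
          obtain ⟨b, hb, hbe⟩ := hγ2
          exact hγ b hbe ⟨i, hb⟩
        exact IStep.ter hstep
          (fun μ e' => hno (some a) (fun b hb => by cases hb; exact hmem) μ e')
          (fun μ e' => hno none (fun b hb => by cases hb) μ e')
    | max X ψ hfree hψ =>
      have hgv : Frm.gvar X ψ := hguard.1
      have hχff : (Frm.max X ψ) ≠ Frm.ff := by intro h; cases h
      have hcl' : (Frm.subst ψ X (Frm.max X ψ)).Closed := by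
        have h := fv_subst ψ X (χ := Frm.max X ψ) hclosed
        rw [Frm.Closed, h]
        exact hclosed
      have hnf' : (Frm.subst ψ X (Frm.max X ψ)).IsNF :=
        isNF_subst hψ X (Frm.IsNF.max X ψ hfree hψ) hclosed
      have hg' : (Frm.subst ψ X (Frm.max X ψ)).Guarded :=
        guarded_subst ψ X hguard.2 hguard hclosed
      have hsat' : p ∈ Sem L (Frm.subst ψ X (Frm.max X ψ)) := mem_sem_unfold hclosed hsat
      have hlt : Frm.topMax (Frm.subst ψ X (Frm.max X ψ)) < N := by
        have ht1 := topMax_subst_le ψ X (Frm.max X ψ) hgv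
        have ht2 : Frm.topMax ψ + 1 ≤ N := hN
        omega
      obtain ⟨ψ₂, h1, h2, h3, h4⟩ := IH _ hlt (Frm.subst ψ X (Frm.max X ψ)) le_rfl
        hcl' hnf' hg' p p' (some a) hsat' hstep
      refine ⟨ψ₂, h1, h2, ?_, h4⟩
      rw [synth_subst ψ X hχff] at h3
      have h5 : IStep L (Trn.fix (X + 1) (synth ψ), p) (some a) (synth ψ₂, p') := istep_fix h3
      have hsy : synth (Frm.max X ψ) = Trn.fix (X + 1) (synth ψ) := by rw [synth]
      rw [hsy]
      exact h5


/-- bisimulation transfer property, forward direction: for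
closed guarded SHMLnf φ with p ∈ ⟦φ⟧, if p -μ-> p' then there is a closed
SHMLnf formula ψ with ⟦φ⟧e[p] -μ-> ⟦ψ⟧e[p'] and p' ∈ ⟦ψ⟧. -/
theorem transfer_forward (Act : Type) (L : LTS Act) (φ : Frm Act)
    (hclosed : φ.Closed) (hnf : φ.IsNF) (hguard : φ.Guarded)
    (p p' : L.S) (μ : Option Act)
    (hsat : p ∈ Sem L φ) (hstep : L.Tr p μ p') :
    ∃ ψ : Frm Act, ψ.Closed ∧ ψ.IsNF ∧
      IStep L (synth φ, p) μ (synth ψ, p') ∧ p' ∈ Sem L ψ :=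
  transfer_aux (Frm.topMax φ) φ le_rfl hclosed hnf hguard p p' μ hsat hstep

end Enf
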